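/- Butterworth filter invertibility: let 0 ≤ λ_0 ≤ λ_1 ≤ ... ≤ λ_{N-1} be real numbers with λ_{N/2} > 0, let λ_cut > 0, let β be a positive integer, and set ψ_n = 2(1 + (λ_n/λ_cut)^{2β})^{-1/2} - 1. Then ψ_n · ψ_{N-1-n} ≠ 1 for all n ∈ {0, ..., N/2 - 1}, and hence C = I_N + J_N Ψ is invertible, i.e., the perfect reconstruction condition is satisfied. -/

import Mathlib

open Matrix

/-- The `N × N` exchange (counter-identity) matrix: `(J_N)_{ij} = 1` if `i + j = N - 1`,
and `0` otherwise. -/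
noncomputable def exchMat (N : ℕ) : Matrix (Fin N) (Fin N) ℝ :=
  Matrix.of fun i j => if (i : ℕ) + (j : ℕ) = N - 1 then (1 : ℝ) else 0

lemma rev_iff {N : ℕ} (i j : Fin N) : (i : ℕ) + (j : ℕ) = N - 1 ↔ j = i.rev := by
  have hi := i.isLt; have hj := j.isLt
  rw [Fin.ext_iff, Fin.val_rev]
  omega

lemma aux_unit (N : ℕ) (hNe : Even N) (ψ : Fin N → ℝ)
    (hd : ∀ i : Fin N, 1 - ψ i * ψ i.rev ≠ 0) :
    IsUnit ((1 : Matrix (Fin N) (Fin N) ℝ) + exchMat N * Matrix.diagonal ψ) := by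
  set d : Fin N → ℝ := fun i => 1 - ψ i * ψ i.rev with hd'
  have hrevne : ∀ i : Fin N, i.rev ≠ i := by
    intro i h
    have := congrArg Fin.val h
    rw [Fin.val_rev] at this
    obtain ⟨k, hk⟩ := hNe
    have := i.isLt
    omega
  set B : Matrix (Fin N) (Fin N) ℝ := Matrix.of fun i k =>
    (if k = i then (d i)⁻¹ else 0) +
    (if (i : ℕ) + (k : ℕ) = N - 1 then -ψ i.rev * (d i)⁻¹ else 0) with hB
  have hMB : ((1 : Matrix (Fin N) (Fin N) ℝ) + exchMat N * Matrix.diagonal ψ) * B = 1 := by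
    ext i k
    rw [Matrix.add_mul, Matrix.one_mul, Matrix.add_apply]
    have hE : (exchMat N * Matrix.diagonal ψ * B) i k = ψ i.rev * B i.rev k := by
      rw [Matrix.mul_apply]
      rw [Finset.sum_eq_single i.rev]
      · rw [Matrix.mul_diagonal]
        have hc : ((i : ℕ) + (i.rev : ℕ) = N - 1) := (rev_iff i i.rev).mpr rfl
        simp only [exchMat, Matrix.of_apply]
        rw [if_pos hc, one_mul]
      · intro j _ hj
        have hc : ¬ ((i : ℕ) + (j : ℕ) = N - 1) := fun h => hj ((rev_iff i j).mp h)
        rw [Matrix.mul_diagonal]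
        simp [exchMat, hc]
      · simp
    rw [hE]
    have hBik : B i k = (if k = i then (d i)⁻¹ else 0) +
        (if k = i.rev then -ψ i.rev * (d i)⁻¹ else 0) := by
      rw [hB]; simp only [Matrix.of_apply]
      congr 1
      simp [rev_iff i k]
    have hBrik : B i.rev k = (if k = i.rev then (d i)⁻¹ else 0) +
        (if k = i then -ψ i * (d i)⁻¹ else 0) := by
      rw [hB]; simp only [Matrix.of_apply]
      congr 1
      · rw [hd']; simp [Fin.rev_rev, mul_comm]
      · have : ((i.rev : ℕ) + (k : ℕ) = N - 1) ↔ k = i := by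
          rw [rev_iff i.rev k, Fin.rev_rev]
        simp only [this]
        rcases eq_or_ne k i with h | h
        · subst h; rw [hd']; simp [Fin.rev_rev, mul_comm]
        · simp [h]
    rw [hBik, hBrik]
    by_cases h1 : k = i
    · subst h1
      have h2 : k ≠ k.rev := fun h => hrevne k h.symm
      simp only [if_pos rfl, if_neg h2, Matrix.one_apply_eq, if_true]
      have hne := hd k
      have hne2 : (1 : ℝ) - ψ k.rev * ψ k ≠ 0 := by rw [mul_comm] at hne; exact hne
      simp only [hd']
      field_simp [hne, hne2]
      ring
    · have h1' : i ≠ k := fun h => h1 h.symm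
      rw [Matrix.one_apply_ne h1']
      by_cases h2 : k = i.rev
      · simp only [if_pos h2, if_neg h1]
        ring
      · simp [h1, h2]
  haveI := invertibleOfRightInverse _ _ hMB
  exact isUnit_of_invertible _

lemma prod_ne_one {a b : ℝ} (ha1 : -1 < a) (ha2 : a ≤ 1) (hb1 : -1 < b) (hb2 : b < 1) :
    a * b ≠ 1 := by
  have h1 : (0:ℝ) ≤ (1 - a) * (1 + b) := mul_nonneg (by linarith) (by linarith)
  have h2 : (0:ℝ) < (1 + a) * (1 - b) := mul_pos (by linarith) (by linarith)
  nlinarith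

/-- Butterworth filter invertibility: for `0 ≤ λ_0 ≤ … ≤ λ_{N-1}` with `λ_{N/2} > 0`,
`λ_cut > 0`, a positive integer `β`, and `ψ_n = 2 (1 + (λ_n/λ_cut)^(2β))^(-1/2) - 1`,
we have `ψ_n ψ_{N-1-n} ≠ 1` for all `n < N/2`, hence `C = I_N + J_N Ψ` is invertible. -/
theorem stmt16 (N : ℕ) (hN : 0 < N) (hNe : Even N)
    (lam : Fin N → ℝ) (hmono : Monotone lam) (h0 : 0 ≤ lam ⟨0, hN⟩)
    (hmid : 0 < lam ⟨N / 2, by omega⟩)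
    (lcut : ℝ) (hcut : 0 < lcut) (β : ℕ) (hβ : 0 < β)
    (ψ : Fin N → ℝ)
    (hψ : ∀ n : Fin N, ψ n = 2 * (1 + (lam n / lcut) ^ (2 * β)) ^ (-(1 / 2) : ℝ) - 1) :
    (∀ n : Fin N, (n : ℕ) < N / 2 → ψ n * ψ n.rev ≠ 1) ∧
    IsUnit ((1 : Matrix (Fin N) (Fin N) ℝ) + exchMat N * Matrix.diagonal ψ) := by
  have hx : ∀ n : Fin N, (0:ℝ) ≤ (lam n / lcut) ^ (2 * β) :=
    fun n => (even_two_mul β).pow_nonneg _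
  have ht0 : ∀ n : Fin N,
      (0:ℝ) < (1 + (lam n / lcut) ^ (2 * β)) ^ (-(1 / 2) : ℝ) := by
    intro n
    exact Real.rpow_pos_of_pos (by linarith [hx n]) _
  have ht1 : ∀ n : Fin N,
      (1 + (lam n / lcut) ^ (2 * β)) ^ (-(1 / 2) : ℝ) ≤ 1 := by
    intro n
    exact Real.rpow_le_one_of_one_le_of_nonpos (by linarith [hx n]) (by norm_num)
  have hgt : ∀ n : Fin N, -1 < ψ n := by
    intro n; rw [hψ n]; linarith [ht0 n]
  have hle : ∀ n : Fin N, ψ n ≤ 1 := by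
    intro n; rw [hψ n]; linarith [ht1 n]
  have hlt : ∀ n : Fin N, 0 < lam n → ψ n < 1 := by
    intro n hp
    have hxp : (0:ℝ) < (lam n / lcut) ^ (2 * β) :=
      pow_pos (div_pos hp hcut) _
    have : (1 + (lam n / lcut) ^ (2 * β)) ^ (-(1 / 2) : ℝ) < 1 :=
      Real.rpow_lt_one_of_one_lt_of_neg (by linarith) (by norm_num)
    rw [hψ n]; linarith
  have hpos : ∀ n : Fin N, N / 2 ≤ (n : ℕ) → 0 < lam n := by
    intro n h
    exact lt_of_lt_of_le hmid (hmono (by rw [Fin.le_def]; exact h))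
  have key : ∀ n : Fin N, ψ n * ψ n.rev ≠ 1 := by
    intro n
    have hrev : (n.rev : ℕ) = N - 1 - (n : ℕ) := by rw [Fin.val_rev]; omega
    rcases lt_or_ge (n : ℕ) (N / 2) with h | h
    · have : 0 < lam n.rev := hpos n.rev (by have := n.isLt; omega)
      exact prod_ne_one (hgt n) (hle n) (hgt n.rev) (hlt n.rev this)
    · have : 0 < lam n := hpos n h
      rw [mul_comm]
      exact prod_ne_one (hgt n.rev) (hle n.rev) (hgt n) (hlt n this)
  exact ⟨fun n _ => key n,
    aux_unit N hNe ψ fun i => sub_ne_zero.mpr (Ne.symm (key i))⟩
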